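/- Every independent map of forests φ: F → F' factors as φ = φ⁺ ∘ φ⁻ where φ⁻ is a degeneracy (surjective, not collapsing any leaf to an element above ε) and φ⁺ is a face map (injective). This factorization is unique up to unique isomorphism. -/
import Mathlib


universe u

namespace BroadPaper

/-- A broad relation on `X`: a relation between finite unordered tuples
(multisets) over `X` and elements of `X`. -/
abbrev Rel (X : Type u) : Type u := Multiset X → X → Prop

variable {X : Type u} {Y : Type u} {A : Type u} {B : Type u} {Z : Type u}

/-- Broad transitivity: if `f₁ ⋯ fₙ ≤ e` and `g̲ᵢ ≤ fᵢ` then `g̲₁ ⋯ g̲ₙ ≤ e`,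
encoded via a multiset of pairs `(g̲ᵢ, fᵢ)`. -/
def BTrans (r : Rel X) : Prop :=
  ∀ (p : Multiset (Multiset X × X)) (e : X),
    r (p.map Prod.snd) e → (∀ q ∈ p, r q.1 q.2) → r ((p.map Prod.fst).sum) e

/-- A pre-broad poset: reflexivity plus broad transitivity. -/
def IsPreBroad (r : Rel X) : Prop := (∀ e : X, r {e} e) ∧ BTrans r

/-- A (commutative) broad poset: a pre-broad poset satisfying antisymmetry. -/
def IsBroad (r : Rel X) : Prop :=
  IsPreBroad r ∧ ∀ e f : X, r {e} f → r {f} e → e = f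

/-- Simplicity: letters in any broad relation are pairwise distinct. -/
def Simple (r : Rel X) : Prop := ∀ fs e, r fs e → fs.Nodup

/-- The descendant relation `f ≤_d e`. -/
def descends (r : Rel X) (f e : X) : Prop := ∃ fs, r fs e ∧ f ∈ fs

def Comparable (r : Rel X) (f g : X) : Prop := descends r f g ∨ descends r g f

def Incomp (r : Rel X) (f g : X) : Prop := ¬ descends r f g ∧ ¬ descends r g f

/-- Blockwise extension of a broad relation to a relation between tuples:
`fs ≤ es` iff `fs = f̲₁ ⋯ f̲ₖ`, `es = e₁ ⋯ eₖ` with `f̲ᵢ ≤ eᵢ`. -/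
def tupleLE (r : Rel X) (fs es : Multiset X) : Prop :=
  ∃ p : Multiset (Multiset X × X),
    p.map Prod.snd = es ∧ (p.map Prod.fst).sum = fs ∧ ∀ q ∈ p, r q.1 q.2

/-- A leaf: no tuple strictly below `e`. -/
def IsLeaf (r : Rel X) (e : X) : Prop := ¬ ∃ fs, r fs e ∧ fs ≠ ({e} : Multiset X)

/-- `fs` is the maximum tuple strictly below `e` (written `e^↑`).
If `fs ≠ 0`, `e` is a node; if `fs = 0`, `e` is a stump. -/
def upTuple (r : Rel X) (e : X) (fs : Multiset X) : Prop :=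
  (r fs e ∧ fs ≠ ({e} : Multiset X)) ∧
    ∀ gs, r gs e → gs ≠ ({e} : Multiset X) → tupleLE r gs fs

def IsStump (r : Rel X) (e : X) : Prop := upTuple r e 0

/-- A dendroidally ordered set (tree): a finite simple broad poset in which
every element is a leaf, node or stump, with a `≤_d`-maximum (root). -/
def IsTree (r : Rel X) : Prop :=
  IsBroad r ∧ Finite X ∧ Simple r ∧
    (∀ e : X, IsLeaf r e ∨ ∃ fs, upTuple r e fs) ∧
    ∃ rt : X, ∀ e, descends r e rt

def IsMaxEl (r : Rel X) (e : X) : Prop := ∀ s, descends r e s → s = e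

/-- A forestially ordered set (forest): each element has a unique
`≤_d`-maximal element above it. -/
def IsForest (r : Rel X) : Prop :=
  IsBroad r ∧ Finite X ∧ Simple r ∧
    (∀ e : X, IsLeaf r e ∨ ∃ fs, upTuple r e fs) ∧
    ∀ e : X, ∃! rt : X, IsMaxEl r rt ∧ descends r e rt

/-- A map of broad posets: preserves broad relations (letterwise on tuples). -/
def BroadHom (r : Rel X) (r' : Rel Y) (φ : X → Y) : Prop :=
  ∀ fs e, r fs e → r' (fs.map φ) (φ e)

/-- `rs` is the root tuple: the tuple of `≤_d`-maximal elements (no repeats). -/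
def IsRootTuple (r : Rel X) (rs : Multiset X) : Prop :=
  rs.Nodup ∧ ∀ x, x ∈ rs ↔ IsMaxEl r x

/-- Independent map of forests: `φ(r̲_F)·e̲ ≤ r̲_{F'}` for some tuple `e̲`. -/
def Independent (r : Rel X) (r' : Rel Y) (φ : X → Y) : Prop :=
  ∃ (rs : Multiset X) (rs' : Multiset Y) (es : Multiset Y),
    IsRootTuple r rs ∧ IsRootTuple r' rs' ∧ tupleLE r' (rs.map φ + es) rs'

/-- The (pre-)broad relation generated by a set of generating relations:
closure under reflexivity and broad transitivity. -/
inductive GenRel (gen : Rel X) : Rel X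
  | of : ∀ fs e, gen fs e → GenRel gen fs e
  | refl : ∀ e, GenRel gen {e} e
  | btrans : ∀ (p : Multiset (Multiset X × X)) (e : X),
      GenRel gen (p.map Prod.snd) e → (∀ q ∈ p, GenRel gen q.1 q.2) →
      GenRel gen ((p.map Prod.fst).sum) e

/-- Generators of the tensor product `S ⊗ T`: relations `s̲ × t ≤ (s,t)` and
`s × t̲ ≤ (s,t)`. -/
def tensorGen (rS : Rel A) (rT : Rel B) : Rel (A × B) := fun xs x =>
  (∃ as, rS as x.1 ∧ xs = as.map fun a => (a, x.2)) ∨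
  (∃ bs, rT bs x.2 ∧ xs = bs.map fun b => (x.1, b))

/-- The tensor product broad relation on `A × B`. -/
def tensorRel (rS : Rel A) (rT : Rel B) : Rel (A × B) := GenRel (tensorGen rS rT)

/-- Product of tuples: all pairs from `as` and `bs`. -/
def mprod (as : Multiset A) (bs : Multiset B) : Multiset (A × B) :=
  as.bind fun a => bs.map fun b => (a, b)

end BroadPaper

namespace BroadPaper

/-- An isomorphism of broad posets: a broad poset map with a two-sided
inverse that is also a broad poset map. -/
def IsIso {X Y : Type u} (r : Rel X) (r' : Rel Y) (φ : X → Y) : Prop :=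
  BroadHom r r' φ ∧ ∃ ψ : Y → X, BroadHom r' r ψ ∧
    Function.LeftInverse ψ φ ∧ Function.RightInverse ψ φ

open Multiset
set_option linter.dupNamespace false
set_option linter.unusedSectionVars false
set_option linter.unusedVariables false

variable {X : Type u} {Y : Type u} {Z : Type u}

section General
variable {r : Rel X}

lemma mem_sum_ms {s : Multiset (Multiset X)} {a : X} (h : a ∈ s.sum) : ∃ t ∈ s, a ∈ t := by
  induction s using Multiset.induction with
  | empty => simp at h
  | cons b t ih =>
      simp [Multiset.sum_cons] at h
      rcases h with h | h
      · exact ⟨b, by simp, h⟩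
      · rcases ih h with ⟨u, hu, ha⟩; exact ⟨u, by simp [hu], ha⟩

lemma GenRel_subset {gen s : Rel X} (hs : IsPreBroad s) (h : ∀ fs e, gen fs e → s fs e)
    {fs : Multiset X} {e : X} (hg : GenRel gen fs e) : s fs e := by
  induction hg with
  | of fs e h' => exact h _ _ h'
  | refl e => exact hs.1 e
  | btrans p e h1 h2 ih1 ih2 => exact hs.2 p e ih1 ih2

lemma map_sum_ms (θ : X → Y) (S : Multiset (Multiset X)) :
    (S.sum).map θ = (S.map (Multiset.map θ)).sum := by
  induction S using Multiset.induction with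
  | empty => simp
  | cons b t ih => simp [Multiset.sum_cons, ih]

lemma GenRel_map {gen : Rel X} {gen' : Rel Y} (θ : X → Y)
    (h : ∀ fs e, gen fs e → GenRel gen' (fs.map θ) (θ e))
    {fs : Multiset X} {e : X} (hg : GenRel gen fs e) : GenRel gen' (fs.map θ) (θ e) := by
  induction hg with
  | of fs e h' => exact h _ _ h'
  | refl e => simpa using GenRel.refl (gen := gen') (θ e)
  | btrans p e h1 h2 ih1 ih2 =>
      have := GenRel.btrans (gen := gen') (p.map fun q => (q.1.map θ, θ q.2)) (θ e) ?_ ?_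
      · convert this using 1
        simp only [Multiset.map_map, Function.comp]
        rw [map_sum_ms]
        simp [Multiset.map_map, Function.comp]
      · simpa [Multiset.map_map, Function.comp] using ih1
      · intro q hq
        simp only [Multiset.mem_map] at hq
        rcases hq with ⟨q', hq', rfl⟩
        exact ih2 q' hq'

-- substitution of one letter
lemma subst [DecidableEq X] (hb : IsPreBroad r) {fs gs : Multiset X} {e x : X}
    (hfs : r fs e) (hx : x ∈ fs) (hgs : r gs x) :
    r (gs + fs.erase x) e := by
  have h := hb.2 ((gs, x) ::ₘ (fs.erase x).map (fun y => (({y} : Multiset X), y))) e ?_ ?_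
  · simpa [Multiset.sum_cons, Multiset.map_map, Function.comp] using h
  · have : ((gs, x) ::ₘ (fs.erase x).map (fun y => (({y} : Multiset X), y))).map Prod.snd
        = x ::ₘ fs.erase x := by simp [Multiset.map_map, Function.comp]
    rw [this, Multiset.cons_erase hx]; exact hfs
  · intro q hq
    simp only [Multiset.mem_cons, Multiset.mem_map] at hq
    rcases hq with rfl | ⟨y, _, rfl⟩
    · exact hgs
    · exact hb.1 y

lemma nodup_contra {t u : Multiset X} {a : X} (hn : (t + u).Nodup)
    (ht : a ∈ t) (hu : a ∈ u) : False := by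
  classical
  have h1 : 1 ≤ Multiset.count a t := Multiset.one_le_count_iff_mem.2 ht
  have h2 : 1 ≤ Multiset.count a u := Multiset.one_le_count_iff_mem.2 hu
  have := Multiset.nodup_iff_count_le_one.1 hn a
  rw [Multiset.count_add] at this
  omega

end General

lemma map_eq_pair {A : Type u} {B : Type u} {C : Type u} {f : A → C} {g : B → C} :
    ∀ {s : Multiset A} {t : Multiset B}, s.map f = t.map g →
      ∃ u : Multiset (A × B), u.map Prod.fst = s ∧ u.map Prod.snd = t ∧
        ∀ q ∈ u, f q.1 = g q.2 := by
  classical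
  intro s
  induction s using Multiset.induction with
  | empty =>
      intro t h
      have : t = 0 := by
        have := congrArg Multiset.card h; simp at this
        exact Multiset.card_eq_zero.1 this.symm
      exact ⟨0, by simp, by simp [this], by simp⟩
  | cons a s ih =>
      intro t h
      have hfa : f a ∈ t.map g := by rw [← h]; simp
      obtain ⟨b, hb, hgb⟩ := Multiset.mem_map.1 hfa
      obtain ⟨t', rfl⟩ := Multiset.exists_cons_of_mem hb
      rw [Multiset.map_cons, Multiset.map_cons, hgb] at h
      have h' : s.map f = t'.map g := (Multiset.cons_inj_right _).1 h
      obtain ⟨u, hu1, hu2, hu3⟩ := ih h'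
      refine ⟨(a, b) ::ₘ u, by simp [hu1], by simp [hu2], ?_⟩
      intro q hq
      rcases Multiset.mem_cons.1 hq with rfl | hq
      · exact hgb.symm
      · exact hu3 q hq

lemma ms_choice {A : Type u} {B : Type u} {R : A → B → Prop} :
    ∀ {s : Multiset A}, (∀ a ∈ s, ∃ b, R a b) →
      ∃ t : Multiset (A × B), t.map Prod.fst = s ∧ ∀ q ∈ t, R q.1 q.2 := by
  intro s
  induction s using Multiset.induction with
  | empty => intro _; exact ⟨0, by simp, by simp⟩
  | cons a s ih =>
      intro h
      obtain ⟨b, hb⟩ := h a (Multiset.mem_cons_self a s)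
      obtain ⟨t, ht1, ht2⟩ := ih (fun a' ha' => h a' (Multiset.mem_cons_of_mem ha'))
      refine ⟨(a, b) ::ₘ t, by simp [ht1], ?_⟩
      intro q hq
      rcases Multiset.mem_cons.1 hq with rfl | hq
      · exact hb
      · exact ht2 q hq

lemma GenRel_hom {gen : Rel X} {s : Rel Y} (m : X → Y) (hs : IsPreBroad s)
    (h : ∀ zs z, gen zs z → s (zs.map m) (m z)) {fs : Multiset X} {e : X}
    (hg : GenRel gen fs e) : s (fs.map m) (m e) := by
  induction hg with
  | of fs e h' => exact h _ _ h'
  | refl e => simpa using hs.1 (m e)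
  | btrans p e h1 h2 ih1 ih2 =>
      have := hs.2 (p.map fun q => (q.1.map m, m q.2)) (m e) ?_ ?_
      · convert this using 1
        simp only [Multiset.map_map, Function.comp]
        rw [map_sum_ms]
        simp [Multiset.map_map, Function.comp]
      · simpa [Multiset.map_map, Function.comp] using ih1
      · intro q hq
        simp only [Multiset.mem_map] at hq
        rcases hq with ⟨q', hq', rfl⟩
        exact ih2 q' hq'
section Forest
variable {r : Rel X}

lemma fin (hF : IsForest r) : Finite X := hF.2.1
lemma simple (hF : IsForest r) : Simple r := hF.2.2.1
lemma pb (hF : IsForest r) : IsPreBroad r := hF.1.1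
lemma leafup (hF : IsForest r) : ∀ e : X, IsLeaf r e ∨ ∃ fs, upTuple r e fs := hF.2.2.2.1
lemma uroot (hF : IsForest r) : ∀ e : X, ∃! rt : X, IsMaxEl r rt ∧ descends r e rt := hF.2.2.2.2

lemma mem_self' (hb : IsBroad r) (hs : Simple r) {fs : Multiset X} {e : X} (h : r fs e)
    (he : e ∈ fs) : fs = ({e} : Multiset X) := by
  classical
  by_contra hne
  have h2 : r (fs + fs.erase e) e := subst hb.1 h he h
  have hnd := hs _ _ h2
  have hne0 : fs.erase e ≠ 0 := by
    intro h0
    apply hne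
    have := Multiset.cons_erase he
    rw [h0] at this
    simpa using this.symm
  obtain ⟨a, ha⟩ := Multiset.exists_mem_of_ne_zero hne0
  exact nodup_contra hnd (Multiset.mem_of_mem_erase ha) ha

lemma mem_self (hF : IsForest r) {fs : Multiset X} {e : X} (h : r fs e) (he : e ∈ fs) :
    fs = ({e} : Multiset X) := mem_self' hF.1 hF.2.2.1 h he

lemma descends_refl (hb : IsPreBroad r) (e : X) : descends r e e :=
  ⟨{e}, hb.1 e, Multiset.mem_singleton_self e⟩

lemma descends_trans (hb : IsPreBroad r) {f g h : X}
    (h1 : descends r f g) (h2 : descends r g h) : descends r f h := by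
  classical
  obtain ⟨fs, hfs, hf⟩ := h1
  obtain ⟨gs, hgs, hg⟩ := h2
  exact ⟨fs + gs.erase g, subst hb hgs hg hfs, Multiset.mem_add.2 (Or.inl hf)⟩

lemma descends_antisymm' (hb : IsBroad r) (hs : Simple r) {e f : X}
    (h1 : descends r e f) (h2 : descends r f e) : e = f := by
  classical
  obtain ⟨fs, hfs, he⟩ := h1
  obtain ⟨gs, hgs, hf⟩ := h2
  have h3 : r (gs + fs.erase e) f := subst hb.1 hfs he hgs
  have h4 : gs + fs.erase e = ({f} : Multiset X) :=
    mem_self' hb hs h3 (Multiset.mem_add.2 (Or.inl hf))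
  have hcard : Multiset.card gs + Multiset.card (fs.erase e) = 1 := by
    have := congrArg Multiset.card h4; simpa using this
  have hgs1 : Multiset.card gs ≥ 1 := by
    rcases Multiset.exists_cons_of_mem hf with ⟨t, rfl⟩; simp
  have her : fs.erase e = 0 := by
    have : Multiset.card (fs.erase e) = 0 := by omega
    exact Multiset.card_eq_zero.1 this
  have hgs' : gs = ({f} : Multiset X) := by rw [her] at h4; simpa using h4
  have hfs' : fs = ({e} : Multiset X) := by
    have := Multiset.cons_erase he; rw [her] at this
    simpa using this.symm
  rw [hgs'] at hgs; rw [hfs'] at hfs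
  exact hb.2 e f hfs hgs

lemma descends_antisymm (hF : IsForest r) {e f : X}
    (h1 : descends r e f) (h2 : descends r f e) : e = f :=
  descends_antisymm' hF.1 hF.2.2.1 h1 h2

noncomputable def htr (r : Rel X) (e : X) : ℕ := Set.ncard {f | descends r f e}

lemma htr_pos (hF : IsForest r) (e : X) : 0 < htr r e := by
  have : Finite X := fin hF
  exact Set.Nonempty.ncard_pos (Set.toFinite _) ⟨e, descends_refl (pb hF) e⟩

lemma ht_lt (hF : IsForest r) {f e : X} (hfe : descends r f e) (hne : f ≠ e) :
    htr r f < htr r e := by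
  have : Finite X := fin hF
  have hsub : {g | descends r g f} ⊆ {g | descends r g e} :=
    fun g hg => descends_trans (pb hF) hg hfe
  have hss : {g | descends r g f} ⊂ {g | descends r g e} :=
    (Set.ssubset_iff_of_subset hsub).2
      ⟨e, descends_refl (pb hF) e, fun hef => hne (descends_antisymm hF hfe hef)⟩
  exact Set.ncard_lt_ncard hss (Set.toFinite _)

lemma letters_incomp (hF : IsForest r) {fs : Multiset X} {e x x' : X} (h : r fs e)
    (hx : x ∈ fs) (hx' : x' ∈ fs) (hne : x ≠ x') (hd : descends r x x') : False := by
  classical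
  obtain ⟨t, ht, hxt⟩ := hd
  have h2 := subst (pb hF) h hx' ht
  exact nodup_contra (simple hF _ _ h2) hxt ((Multiset.mem_erase_of_ne hne).2 hx)

lemma tupleLE_mem {gs us : Multiset X} {x : X} (h : tupleLE r gs us) (hx : x ∈ gs) :
    ∃ b u, r b u ∧ x ∈ b ∧ u ∈ us := by
  obtain ⟨p, hsnd, hfst, hrel⟩ := h
  rw [← hfst] at hx
  obtain ⟨t, htp, hxt⟩ := mem_sum_ms hx
  obtain ⟨q, hq, rfl⟩ := Multiset.mem_map.1 htp
  exact ⟨q.1, q.2, hrel q hq, hxt, hsnd ▸ Multiset.mem_map_of_mem _ hq⟩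

lemma up_not_mem (hF : IsForest r) {e : X} {us : Multiset X} (h : upTuple r e us) : e ∉ us :=
  fun he => h.1.2 (mem_self hF h.1.1 he)

lemma up_strict (hF : IsForest r) {e u : X} {us : Multiset X} (h : upTuple r e us)
    (hu : u ∈ us) : descends r u e ∧ u ≠ e :=
  ⟨⟨us, h.1.1, hu⟩, fun hue => up_not_mem hF h (hue ▸ hu)⟩

lemma not_leaf_of (hF : IsForest r) {fs : Multiset X} {e : X} (h : r fs e)
    (hne : fs ≠ ({e} : Multiset X)) : ∃ us, upTuple r e us := by
  rcases leafup hF e with hl | hup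
  · exact absurd ⟨fs, h, hne⟩ hl
  · exact hup

lemma strict_of_mem (hF : IsForest r) {fs : Multiset X} {e x : X} (h : r fs e)
    (hne : fs ≠ ({e} : Multiset X)) (hx : x ∈ fs) : descends r x e ∧ x ≠ e := by
  refine ⟨⟨fs, h, hx⟩, ?_⟩
  rintro rfl
  exact hne (mem_self hF h hx)

lemma common_tuple_aux (hF : IsForest r) :
    ∀ n : ℕ, ∀ {e x x' : X}, htr r e ≤ n → descends r x e → descends r x' e →
      ¬ descends r x x' → ¬ descends r x' x →
      ∃ fs, r fs e ∧ x ∈ fs ∧ x' ∈ fs := by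
  classical
  intro n
  induction n with
  | zero =>
      intro e x x' hn hxe _ _ _
      exfalso
      have : Finite X := fin hF
      have h1 := htr_pos hF e
      omega
  | succ n ih =>
      intro e x x' hn hxe hx'e hnd hnd'
      have hxx' : x ≠ x' := by rintro rfl; exact hnd (descends_refl (pb hF) x)
      have hxne : x ≠ e := by rintro rfl; exact hnd' hx'e
      have hx'ne : x' ≠ e := by rintro rfl; exact hnd hxe
      obtain ⟨fs₀, hfs₀, hxfs₀⟩ := hxe
      have hfs₀ne : fs₀ ≠ ({e} : Multiset X) := by
        intro h0; rw [h0] at hxfs₀; exact hxne (Multiset.mem_singleton.1 hxfs₀)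
      obtain ⟨us, hup⟩ := not_leaf_of hF hfs₀ hfs₀ne
      obtain ⟨fs₁, hfs₁, hx'fs₁⟩ := hx'e
      have hfs₁ne : fs₁ ≠ ({e} : Multiset X) := by
        intro h0; rw [h0] at hx'fs₁; exact hx'ne (Multiset.mem_singleton.1 hx'fs₁)
      obtain ⟨b, u, hbu, hxb, hu⟩ := tupleLE_mem (hup.2 fs₀ hfs₀ hfs₀ne) hxfs₀
      obtain ⟨b', u', hbu', hx'b', hu'⟩ := tupleLE_mem (hup.2 fs₁ hfs₁ hfs₁ne) hx'fs₁
      have hxu : descends r x u := ⟨b, hbu, hxb⟩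
      have hx'u' : descends r x' u' := ⟨b', hbu', hx'b'⟩
      by_cases huu : u = u'
      · subst huu
        have hune : u ≠ e := (up_strict hF hup hu).2
        have : htr r u ≤ n :=
          Nat.lt_succ_iff.1 (Nat.lt_of_lt_of_le (ht_lt hF (up_strict hF hup hu).1 hune) hn)
        obtain ⟨gs, hgs, hxgs, hx'gs⟩ := ih this hxu hx'u' hnd hnd'
        refine ⟨gs + us.erase u, subst (pb hF) hup.1.1 hu hgs, ?_, ?_⟩
        · exact Multiset.mem_add.2 (Or.inl hxgs)
        · exact Multiset.mem_add.2 (Or.inl hx'gs)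
      · obtain ⟨t, htu, hxt⟩ := hxu
        obtain ⟨t', htu', hx't'⟩ := hx'u'
        have h1 : r (t + us.erase u) e := subst (pb hF) hup.1.1 hu htu
        have hu'mem : u' ∈ t + us.erase u :=
          Multiset.mem_add.2 (Or.inr ((Multiset.mem_erase_of_ne (Ne.symm huu)).2 hu'))
        have h2 : r (t' + (t + us.erase u).erase u') e := subst (pb hF) h1 hu'mem htu'
        have hxnu : x ≠ u' := by
          rintro rfl; exact hnd' ⟨t', htu', hx't'⟩
        exact ⟨t' + (t + us.erase u).erase u', h2,
          Multiset.mem_add.2 (Or.inr ((Multiset.mem_erase_of_ne hxnu).2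
            (Multiset.mem_add.2 (Or.inl hxt)))),
          Multiset.mem_add.2 (Or.inl hx't')⟩

lemma common_tuple (hF : IsForest r) {e x x' : X} (hxe : descends r x e) (hx'e : descends r x' e)
    (hnd : ¬ descends r x x') (hnd' : ¬ descends r x' x) :
    ∃ fs, r fs e ∧ x ∈ fs ∧ x' ∈ fs :=
  common_tuple_aux hF (htr r e) (le_refl _) hxe hx'e hnd hnd'

lemma comparable_of_common_below (hF : IsForest r) {w z₁ z₂ : X}
    (h1 : descends r w z₁) (h2 : descends r w z₂) :
    descends r z₁ z₂ ∨ descends r z₂ z₁ := by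
  classical
  by_contra hc
  push_neg at hc
  obtain ⟨hnd, hnd'⟩ := hc
  obtain ⟨rt, ⟨hmax, hwrt⟩, huniq⟩ := uroot hF w
  obtain ⟨rt₁, ⟨hmax₁, hz₁⟩, _⟩ := uroot hF z₁
  obtain ⟨rt₂, ⟨hmax₂, hz₂⟩, _⟩ := uroot hF z₂
  have e1 : rt₁ = rt := huniq rt₁ ⟨hmax₁, descends_trans (pb hF) h1 hz₁⟩
  have e2 : rt₂ = rt := huniq rt₂ ⟨hmax₂, descends_trans (pb hF) h2 hz₂⟩
  obtain ⟨fs, hfs, hz₁fs, hz₂fs⟩ := common_tuple hF (e1 ▸ hz₁) (e2 ▸ hz₂) hnd hnd'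
  have hz12 : z₁ ≠ z₂ := by rintro rfl; exact hnd (descends_refl (pb hF) z₁)
  have hwz₂ : w ≠ z₂ := by rintro rfl; exact hnd' h1
  obtain ⟨t₁, ht₁, hwt₁⟩ := h1
  obtain ⟨t₂, ht₂, hwt₂⟩ := h2
  have u1 : r (t₁ + fs.erase z₁) rt := subst (pb hF) hfs hz₁fs ht₁
  have hz₂u1 : z₂ ∈ t₁ + fs.erase z₁ :=
    Multiset.mem_add.2 (Or.inr ((Multiset.mem_erase_of_ne (Ne.symm hz12)).2 hz₂fs))
  have u2 : r (t₂ + (t₁ + fs.erase z₁).erase z₂) rt := subst (pb hF) u1 hz₂u1 ht₂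
  exact nodup_contra (simple hF _ _ u2) hwt₂ ((Multiset.mem_erase_of_ne hwz₂).2
    (Multiset.mem_add.2 (Or.inl hwt₁)))

def upGen (r : Rel X) : Rel X := fun fs e => upTuple r e fs

lemma sum_eq_zero_ms {S : Multiset (Multiset X)} (h : S.sum = 0) : ∀ t ∈ S, t = 0 := by
  induction S using Multiset.induction with
  | empty => simp
  | cons b t ih =>
      rw [Multiset.sum_cons] at h
      have hb : b = 0 := by
        have h2 : Multiset.card b + Multiset.card t.sum = 0 := by
          simpa using congrArg Multiset.card h
        exact Multiset.card_eq_zero.1 (by omega)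
      have ht : t.sum = 0 := by rw [hb] at h; simpa using h
      intro u hu
      rcases Multiset.mem_cons.1 hu with rfl | hu
      · exact hb
      · exact ih ht u hu

lemma rel_genUp_aux (hF : IsForest r) :
    ∀ n : ℕ, ∀ {e : X} {fs : Multiset X}, htr r e ≤ n → r fs e → GenRel (upGen r) fs e := by
  intro n
  induction n with
  | zero =>
      intro e fs hn h
      by_cases hfe : fs = ({e} : Multiset X)
      · rw [hfe]; exact GenRel.refl e
      · obtain ⟨us, hup⟩ := not_leaf_of hF h hfe
        obtain ⟨x, hx⟩ : ∃ x, x ∈ ({e} : Multiset X) := ⟨e, by simp⟩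
        -- htr r e ≥ 1 always, contradiction
        exfalso
        have : Finite X := fin hF
        have h1 := htr_pos hF e
        omega
  | succ n ih =>
      intro e fs hn h
      by_cases hfe : fs = ({e} : Multiset X)
      · rw [hfe]; exact GenRel.refl e
      · obtain ⟨us, hup⟩ := not_leaf_of hF h hfe
        obtain ⟨p, hsnd, hfst, hrel⟩ := hup.2 fs h hfe
        refine hfst ▸ GenRel.btrans p e (hsnd ▸ GenRel.of us e hup) ?_
        intro q hq
        have hq2 : q.2 ∈ us := hsnd ▸ Multiset.mem_map_of_mem _ hq
        have hst := up_strict hF hup hq2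
        exact ih (Nat.lt_succ_iff.1 (Nat.lt_of_lt_of_le (ht_lt hF hst.1 hst.2) hn)) (hrel q hq)

lemma rel_genUp (hF : IsForest r) {e : X} {fs : Multiset X} (h : r fs e) :
    GenRel (upGen r) fs e :=
  rel_genUp_aux hF (htr r e) (le_refl _) h

lemma stump_down_aux (hF : IsForest r) :
    ∀ n : ℕ, ∀ {v y : X}, htr r v ≤ n → r 0 v → descends r y v → r 0 y := by
  intro n
  induction n with
  | zero =>
      intro v y hn _ _
      exfalso
      have : Finite X := fin hF
      have h1 := htr_pos hF v
      omega
  | succ n ih =>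
      intro v y hn h0 hyv
      by_cases hy : y = v
      · exact hy ▸ h0
      · obtain ⟨gs, hgs, hygs⟩ := hyv
        have hgsne : gs ≠ ({v} : Multiset X) := by
          intro h'; rw [h'] at hygs; exact hy (Multiset.mem_singleton.1 hygs)
        obtain ⟨us, hup⟩ := not_leaf_of hF hgs hgsne
        have h0ne : (0 : Multiset X) ≠ ({v} : Multiset X) := by simp
        obtain ⟨p0, hsnd0, hfst0, hrel0⟩ := hup.2 0 h0 h0ne
        have hall0 : ∀ u ∈ us, r 0 u := by
          intro u hu
          rw [← hsnd0] at hu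
          obtain ⟨q, hq, rfl⟩ := Multiset.mem_map.1 hu
          have : q.1 = 0 := sum_eq_zero_ms hfst0 q.1 (Multiset.mem_map_of_mem _ hq)
          exact this ▸ hrel0 q hq
        obtain ⟨b, u, hbu, hyb, hu⟩ := tupleLE_mem (hup.2 gs hgs hgsne) hygs
        have hst := up_strict hF hup hu
        exact ih (Nat.lt_succ_iff.1 (Nat.lt_of_lt_of_le (ht_lt hF hst.1 hst.2) hn))
          (hall0 u hu) ⟨b, hbu, hyb⟩

lemma stump_down (hF : IsForest r) {v y : X} (h0 : r 0 v) (hyv : descends r y v) : r 0 y :=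
  stump_down_aux hF (htr r v) (le_refl _) h0 hyv

end Forest
section MapMach
variable {r : Rel X} {r' : Rel Y} {φ : X → Y}

lemma hom_descends (hhom : BroadHom r r' φ) {x e : X} (h : descends r x e) :
    descends r' (φ x) (φ e) := by
  obtain ⟨fs, hfs, hx⟩ := h
  exact ⟨fs.map φ, hhom _ _ hfs, Multiset.mem_map_of_mem _ hx⟩

lemma nodup_map_contra {fs : Multiset X} {x x' : X} (h : (fs.map φ).Nodup)
    (hx : x ∈ fs) (hx' : x' ∈ fs) (hne : x ≠ x') (he : φ x = φ x') : False := by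
  classical
  obtain ⟨t, rfl⟩ := Multiset.exists_cons_of_mem hx
  have hx't : x' ∈ t := by
    rcases Multiset.mem_cons.1 hx' with h' | h'
    · exact absurd h'.symm hne
    · exact h'
  rw [Multiset.map_cons] at h
  have := (Multiset.nodup_cons.1 h).1
  exact this (he ▸ Multiset.mem_map_of_mem _ hx't)

lemma unary (hF' : IsForest r') (hhom : BroadHom r r' φ) {x x' : X} {fs : Multiset X}
    (hker : φ x = φ x') (h : r fs x') (hx : x ∈ fs) : fs = ({x} : Multiset X) := by
  have h1 : r' (fs.map φ) (φ x') := hhom _ _ h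
  have h2 : fs.map φ = ({φ x'} : Multiset Y) :=
    mem_self hF' h1 (hker ▸ Multiset.mem_map_of_mem _ hx)
  have hcard : Multiset.card fs = 1 := by
    have := congrArg Multiset.card h2; simpa using this
  obtain ⟨a, rfl⟩ := Multiset.card_eq_one.1 hcard
  rw [Multiset.mem_singleton.1 hx]

lemma unary_rel (hF' : IsForest r') (hhom : BroadHom r r' φ) {x x' : X}
    (hker : φ x' = φ x) (h : descends r x' x) : r ({x'} : Multiset X) x := by
  obtain ⟨gs, hgs, hx'⟩ := h
  exact (unary hF' hhom hker hgs hx') ▸ hgs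

lemma maxel_of_mem_roottuple {rs : Multiset X} (hrs : IsRootTuple r rs) {x : X}
    (hx : x ∈ rs) : IsMaxEl r x := (hrs.2 x).1 hx

lemma two_blocks [DecidableEq Y] {p : Multiset (Multiset Y × Y)} {a : Y}
    (hnd : ∀ q ∈ p, (q.1).Nodup)
    (h2 : 2 ≤ Multiset.count a ((p.map Prod.fst).sum)) :
    ∃ q₁ ∈ p, ∃ q₂ ∈ p.erase q₁, a ∈ q₁.1 ∧ a ∈ q₂.1 := by
  classical
  induction p using Multiset.induction with
  | empty => simp at h2
  | cons q p ih =>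
      rw [Multiset.map_cons, Multiset.sum_cons, Multiset.count_add] at h2
      have hc1 : Multiset.count a q.1 ≤ 1 :=
        Multiset.nodup_iff_count_le_one.1 (hnd q (Multiset.mem_cons_self q p)) a
      by_cases hq : a ∈ q.1
      · have hc2 : 1 ≤ Multiset.count a ((p.map Prod.fst).sum) := by omega
        have : a ∈ (p.map Prod.fst).sum := Multiset.one_le_count_iff_mem.1 hc2
        obtain ⟨t, htp, hat⟩ := mem_sum_ms this
        obtain ⟨q₂, hq₂, rfl⟩ := Multiset.mem_map.1 htp
        exact ⟨q, Multiset.mem_cons_self q p, q₂, by simpa using hq₂, hq, hat⟩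
      · have hc0 : Multiset.count a q.1 = 0 := Multiset.count_eq_zero.2 hq
        have h2' : 2 ≤ Multiset.count a ((p.map Prod.fst).sum) := by omega
        obtain ⟨q₁, hq₁, q₂, hq₂, ha₁, ha₂⟩ :=
          ih (fun q' hq' => hnd q' (Multiset.mem_cons_of_mem hq')) h2'
        refine ⟨q₁, Multiset.mem_cons_of_mem hq₁, q₂, ?_, ha₁, ha₂⟩
        exact Multiset.mem_of_le
          (Multiset.erase_le_erase q₁ (Multiset.le_cons_self p q)) hq₂

lemma no_two_above [DecidableEq Y] (hF' : IsForest r') {p : Multiset (Multiset Y × Y)}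
    (hsnd : (p.map Prod.snd).Nodup)
    (hmax : ∀ q ∈ p, IsMaxEl r' q.2) (hrel : ∀ q ∈ p, r' q.1 q.2) {a : Y}
    (h2 : 2 ≤ Multiset.count a ((p.map Prod.fst).sum)) : False := by
  classical
  obtain ⟨q₁, hq₁, q₂, hq₂, ha₁, ha₂⟩ :=
    two_blocks (fun q hq => simple hF' _ _ (hrel q hq)) h2
  have hq₂p : q₂ ∈ p := Multiset.mem_of_le (Multiset.erase_le q₁ p) hq₂
  have hd₁ : descends r' a q₁.2 := ⟨q₁.1, hrel q₁ hq₁, ha₁⟩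
  have hd₂ : descends r' a q₂.2 := ⟨q₂.1, hrel q₂ hq₂p, ha₂⟩
  obtain ⟨rt, _, huniq⟩ := uroot hF' a
  have e1 : q₁.2 = rt := huniq q₁.2 ⟨hmax q₁ hq₁, hd₁⟩
  have e2 : q₂.2 = rt := huniq q₂.2 ⟨hmax q₂ hq₂p, hd₂⟩
  -- q₁.2 = q₂.2 leads to nodup contradiction on p.map snd
  have hp : p = q₁ ::ₘ p.erase q₁ := (Multiset.cons_erase hq₁).symm
  have : (p.map Prod.snd) = q₁.2 ::ₘ (p.erase q₁).map Prod.snd := by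
    conv_lhs => rw [hp]
    simp
  rw [this] at hsnd
  exact (Multiset.nodup_cons.1 hsnd).1
    (e1 ▸ e2 ▸ Multiset.mem_map_of_mem Prod.snd hq₂)

section WithInd
variable (hF : IsForest r) (hF' : IsForest r') (hhom : BroadHom r r' φ)
  (hind : Independent r r' φ)
include hF hF' hhom hind

lemma root_inj {rt rt' : X} (hrt : IsMaxEl r rt) (hrt' : IsMaxEl r rt')
    (hne : rt ≠ rt') (he : φ rt = φ rt') : False := by
  classical
  have _inst : DecidableEq Y := Classical.decEq Y
  obtain ⟨rs, rs', es, hrs, hrs', p, hsnd, hfst, hrel⟩ := hind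
  have h1 : rt ∈ rs := (hrs.2 rt).2 hrt
  have h2 : rt' ∈ rs := (hrs.2 rt').2 hrt'
  -- count of φ rt in rs.map φ + es is ≥ 2
  have hcount : 2 ≤ Multiset.count (φ rt) (rs.map φ + es) := by
    obtain ⟨t, rfl⟩ := Multiset.exists_cons_of_mem h1
    have h2t : rt' ∈ t := by
      rcases Multiset.mem_cons.1 h2 with h' | h'
      · exact absurd h'.symm hne
      · exact h'
    rw [Multiset.map_cons, Multiset.count_add, Multiset.count_cons_self]
    have : 1 ≤ Multiset.count (φ rt) (t.map φ) :=
      Multiset.one_le_count_iff_mem.2 (he ▸ Multiset.mem_map_of_mem _ h2t)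
    omega
  refine no_two_above hF' (hsnd ▸ hrs'.1) ?_ hrel (a := φ rt) ?_
  · intro q hq
    exact (hrs'.2 q.2).1 (hsnd ▸ Multiset.mem_map_of_mem _ hq)
  · rw [hfst]; exact hcount

lemma fiber_comparable {x x' : X} (he : φ x = φ x') :
    x = x' ∨ descends r x x' ∨ descends r x' x := by
  classical
  by_contra hc
  push_neg at hc
  obtain ⟨hne, hnd, hnd'⟩ := hc
  obtain ⟨rt, ⟨hmax, hxrt⟩, huniq⟩ := uroot hF x
  obtain ⟨rt', ⟨hmax', hx'rt'⟩, _⟩ := uroot hF x'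
  by_cases hrr : rt = rt'
  · subst hrr
    obtain ⟨fs, hfs, hxfs, hx'fs⟩ := common_tuple hF hxrt hx'rt' hnd hnd'
    exact nodup_map_contra (simple hF' _ _ (hhom _ _ hfs)) hxfs hx'fs hne he
  · -- distinct roots
    have hφrr : φ rt ≠ φ rt' := fun h => root_inj hF hF' hhom hind hmax hmax' hrr h
    obtain ⟨rs, rs', es, hrs, hrs', p, hsnd, hfst, hrel⟩ := hind
    have hrtrs : rt ∈ rs := (hrs.2 rt).2 hmax
    have hrt'rs : rt' ∈ rs := (hrs.2 rt').2 hmax'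
    have hmem1 : φ rt ∈ (p.map Prod.fst).sum := by
      rw [hfst]; exact Multiset.mem_add.2 (Or.inl (Multiset.mem_map_of_mem _ hrtrs))
    have hmem2 : φ rt' ∈ (p.map Prod.fst).sum := by
      rw [hfst]; exact Multiset.mem_add.2 (Or.inl (Multiset.mem_map_of_mem _ hrt'rs))
    obtain ⟨t1, ht1p, hin1⟩ := mem_sum_ms hmem1
    obtain ⟨q₁, hq₁, rfl⟩ := Multiset.mem_map.1 ht1p
    obtain ⟨t2, ht2p, hin2⟩ := mem_sum_ms hmem2
    obtain ⟨q₂, hq₂, rfl⟩ := Multiset.mem_map.1 ht2p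
    -- targets are maximal, both above φ x; hence equal
    have hd1 : descends r' (φ x) q₁.2 :=
      descends_trans (pb hF') (hom_descends hhom hxrt) ⟨q₁.1, hrel q₁ hq₁, hin1⟩
    have hd2 : descends r' (φ x) q₂.2 := by
      rw [he]
      exact descends_trans (pb hF') (hom_descends hhom hx'rt') ⟨q₂.1, hrel q₂ hq₂, hin2⟩
    obtain ⟨ρ, _, huniqY⟩ := uroot hF' (φ x)
    have hm1 : IsMaxEl r' q₁.2 := (hrs'.2 q₁.2).1 (hsnd ▸ Multiset.mem_map_of_mem _ hq₁)
    have hm2 : IsMaxEl r' q₂.2 := (hrs'.2 q₂.2).1 (hsnd ▸ Multiset.mem_map_of_mem _ hq₂)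
    have e1 : q₁.2 = ρ := huniqY q₁.2 ⟨hm1, hd1⟩
    have e2 : q₂.2 = ρ := huniqY q₂.2 ⟨hm2, hd2⟩
    -- q₁ = q₂ since snd map is nodup
    have hqq : q₁ = q₂ := by
      have hndm : (p.map Prod.snd).Nodup := hsnd ▸ hrs'.1
      exact Multiset.inj_on_of_nodup_map hndm q₁ hq₁ q₂ hq₂ (e1.trans e2.symm)
    subst hqq
    -- now φ rt, φ rt' both in q₁.1, double substitution
    obtain ⟨fs, hfs, hxfs⟩ := hxrt
    obtain ⟨fs', hfs', hx'fs'⟩ := hx'rt'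
    have hb := hrel q₁ hq₁
    have ht₁ : r' (fs.map φ) (φ rt) := hhom _ _ hfs
    have ht₂ : r' (fs'.map φ) (φ rt') := hhom _ _ hfs'
    have u1 : r' (fs.map φ + q₁.1.erase (φ rt)) q₁.2 := subst (pb hF') hb hin1 ht₁
    by_cases hcase : φ x = φ rt'
    · refine nodup_contra (simple hF' _ _ u1) (a := φ rt') ?_
        ((Multiset.mem_erase_of_ne (Ne.symm hφrr)).2 hin2)
      rw [← hcase]
      exact Multiset.mem_map_of_mem _ hxfs
    · have hrt'mem : φ rt' ∈ fs.map φ + q₁.1.erase (φ rt) :=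
        Multiset.mem_add.2 (Or.inr ((Multiset.mem_erase_of_ne (Ne.symm hφrr)).2 hin2))
      have u2 : r' (fs'.map φ + (fs.map φ + q₁.1.erase (φ rt)).erase (φ rt')) q₁.2 :=
        subst (pb hF') u1 hrt'mem ht₂
      refine nodup_contra (simple hF' _ _ u2) (a := φ x) ?_ ?_
      · rw [he]; exact Multiset.mem_map_of_mem _ hx'fs'
      · exact (Multiset.mem_erase_of_ne hcase).2
          (Multiset.mem_add.2 (Or.inl (Multiset.mem_map_of_mem _ hxfs)))

end WithInd
end MapMach
section MapMach2
variable {r : Rel X} {r' : Rel Y} {φ : X → Y}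
variable (hF : IsForest r) (hF' : IsForest r') (hhom : BroadHom r r' φ)
  (hind : Independent r r' φ)
include hF hF' hhom hind

lemma exists_min_fiber_aux :
    ∀ n : ℕ, ∀ a : X, htr r a ≤ n →
      ∃ x₀, φ x₀ = φ a ∧ ∀ x', φ x' = φ a → descends r x₀ x' := by
  intro n
  induction n with
  | zero =>
      intro a hn
      exfalso
      have := htr_pos hF a
      omega
  | succ n ih =>
      intro a hn
      by_cases hall : ∀ x', φ x' = φ a → descends r a x'
      · exact ⟨a, rfl, hall⟩
      · push_neg at hall
        obtain ⟨x', hx', hnd⟩ := hall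
        have hne : x' ≠ a := fun h => hnd (by rw [h]; exact descends_refl (pb hF) a)
        rcases fiber_comparable hF hF' hhom hind (hx'.symm : φ a = φ x') with h | h | h
        · exact absurd h.symm hne
        · exact absurd h hnd
        · have hlt : htr r x' ≤ n :=
            Nat.lt_succ_iff.1 (lt_of_lt_of_le (ht_lt hF h hne) hn)
          obtain ⟨x₀, h1, h2⟩ := ih x' hlt
          exact ⟨x₀, h1.trans hx', fun x'' hx'' => h2 x'' (hx''.trans hx'.symm)⟩

lemma exists_min_fiber (a : X) :
    ∃ x₀, φ x₀ = φ a ∧ ∀ x', φ x' = φ a → descends r x₀ x' :=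
  exists_min_fiber_aux hF hF' hhom hind (htr r a) a (le_refl _)

lemma fiber_up {x x'' : X} (he : φ x'' = φ x) (hd : descends r x'' x) (hne : x'' ≠ x) :
    ∃ u, upTuple r x ({u} : Multiset X) ∧ φ u = φ x ∧ descends r u x ∧ u ≠ x := by
  have h1 : r ({x''} : Multiset X) x := unary_rel hF' hhom he hd
  have hns : ({x''} : Multiset X) ≠ ({x} : Multiset X) := by
    simpa using hne
  obtain ⟨us, hup⟩ := not_leaf_of hF h1 hns
  obtain ⟨b, u, hbu, hx''b, hu⟩ :=
    tupleLE_mem (hup.2 _ h1 hns) (Multiset.mem_singleton_self x'')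
  have hux : descends r u x := (up_strict hF hup hu).1
  have hune : u ≠ x := (up_strict hF hup hu).2
  have hφu : φ u = φ x := by
    refine descends_antisymm hF' (hom_descends hhom hux) ?_
    have : descends r x'' u := ⟨b, hbu, hx''b⟩
    rw [← he]
    exact hom_descends hhom this
  have huseq : us = ({u} : Multiset X) := unary hF' hhom hφu hup.1.1 hu
  exact ⟨u, huseq ▸ hup, hφu, hux, hune⟩

lemma fiber_lower_aux :
    ∀ n : ℕ, ∀ {x x' : X} {fs : Multiset X}, htr r x ≤ n → φ x = φ x' →
      descends r x' x → r fs x → ∃ fs', r fs' x' ∧ fs'.map φ = fs.map φ := by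
  classical
  intro n
  induction n with
  | zero =>
      intro x x' fs hn _ _ _
      exfalso
      have := htr_pos hF x
      omega
  | succ n ih =>
      intro x x' fs hn he hd h
      by_cases hxx : x = x'
      · exact ⟨fs, hxx ▸ h, rfl⟩
      · have hne' : x' ≠ x := fun h' => hxx h'.symm
        obtain ⟨u, hup, hφu, hux, hune⟩ :=
          fiber_up hF hF' hhom hind (he.symm : φ x' = φ x) hd hne'
        by_cases hfs : fs = ({x} : Multiset X)
        · refine ⟨({x'} : Multiset X), (pb hF).1 x', ?_⟩
          rw [hfs]; simp [he]
        · obtain ⟨p, hsnd, hfst, hrel⟩ := hup.2 fs h hfs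
          have hcard : Multiset.card p = 1 := by
            have := congrArg Multiset.card hsnd; simpa using this
          obtain ⟨q, hq⟩ := Multiset.card_eq_one.1 hcard
          have hq2 : q.2 = u := by rw [hq] at hsnd; simpa using hsnd
          have hq1 : q.1 = fs := by rw [hq] at hfst; simpa using hfst
          have hfsu : r fs u := by
            rw [← hq1, ← hq2]; exact hrel q (by rw [hq]; simp)
          have hφ : φ u = φ x' := hφu.trans he
          rcases fiber_comparable hF hF' hhom hind hφ with h' | h' | h'
          · exact ⟨fs, h' ▸ hfsu, rfl⟩
          · have h2 : r ({u} : Multiset X) x' := unary_rel hF' hhom hφ h'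
            have h3 := subst (pb hF) h2 (Multiset.mem_singleton_self u) hfsu
            exact ⟨fs, by simpa using h3, rfl⟩
          · have hlt : htr r u ≤ n :=
              Nat.lt_succ_iff.1 (lt_of_lt_of_le (ht_lt hF hux hune) hn)
            exact ih hlt hφ h' hfsu

lemma fiber_lower {x x' : X} {fs : Multiset X} (he : φ x = φ x')
    (hd : descends r x' x) (h : r fs x) :
    ∃ fs', r fs' x' ∧ fs'.map φ = fs.map φ :=
  fiber_lower_aux hF hF' hhom hind (htr r x) (le_refl _) he hd h

end MapMach2
def pushRel (r : Rel X) (d : X → Z) : Rel Z := fun zs z =>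
  ∃ fs e, r fs e ∧ fs.map d = zs ∧ d e = z

section CanPack
variable {r : Rel X} {r' : Rel Y} {φ : X → Y} {d : X → Z} {m : Z → Y}
variable (hF : IsForest r) (hF' : IsForest r') (hhom : BroadHom r r' φ)
  (hind : Independent r r' φ) (hdm : ∀ x, m (d x) = φ x)
  (hds : Function.Surjective d) (hker : ∀ x x', φ x = φ x' → d x = d x')

lemma dker (hdm : ∀ x, m (d x) = φ x) (hker : ∀ x x', φ x = φ x' → d x = d x')
    {x x' : X} : d x = d x' ↔ φ x = φ x' :=
  ⟨fun h => by rw [← hdm x, ← hdm x', h], hker x x'⟩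

include hF hF' hhom hind hdm hker

lemma map_ker_eq {s t : Multiset X} (h : s.map φ = t.map φ) : s.map d = t.map d := by
  obtain ⟨u, hu1, hu2, hu3⟩ := map_eq_pair h
  rw [← hu1, ← hu2, Multiset.map_map, Multiset.map_map]
  exact Multiset.map_congr rfl (fun q hq => hker _ _ (hu3 q hq))

lemma exists_xmin (hds : Function.Surjective d) (z : Z) :
    ∃ x₀, d x₀ = z ∧ ∀ x', d x' = z → descends r x₀ x' := by
  obtain ⟨a, rfl⟩ := hds z
  obtain ⟨x₀, h1, h2⟩ := exists_min_fiber hF hF' hhom hind a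
  exact ⟨x₀, hker _ _ h1, fun x' hx' => h2 x' ((dker hdm hker).1 hx')⟩

lemma can_down {zs : Multiset Z} {z : Z} (h : GenRel (pushRel r d) zs z)
    (hds : Function.Surjective d) :
    ∀ x₀, d x₀ = z → (∀ x', d x' = z → descends r x₀ x') →
      ∃ fs, r fs x₀ ∧ fs.map d = zs := by
  classical
  induction h with
  | of zs z h' =>
      obtain ⟨fs, e, hfs, rfl, rfl⟩ := h'
      intro x₀ hx₀ hmin
      have hde : descends r x₀ e := hmin e rfl
      have hφ : φ e = φ x₀ := ((dker hdm hker).1 hx₀).symm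
      obtain ⟨fs', h1, h2⟩ := fiber_lower hF hF' hhom hind hφ hde hfs
      exact ⟨fs', h1, map_ker_eq hF hF' hhom hind hdm hker h2⟩
  | refl z =>
      intro x₀ hx₀ _
      exact ⟨{x₀}, (pb hF).1 x₀, by simp [hx₀]⟩
  | btrans p e h1 h2 ih1 ih2 =>
      intro x₀ hx₀ hmin
      obtain ⟨fs, hfs, hfsd⟩ := ih1 x₀ hx₀ hmin
      obtain ⟨u, hu1, hu2, hu3⟩ := map_eq_pair (f := d) (g := Prod.snd) hfsd
      have hctx : ∀ a ∈ u, ∃ gs, r gs a.1 ∧ gs.map d = a.2.1 := by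
        intro a ha
        have hap : a.2 ∈ p := hu2 ▸ Multiset.mem_map_of_mem _ ha
        obtain ⟨x₀q, hq1, hq2⟩ := exists_xmin hF hF' hhom hind hdm hker hds a.2.2
        obtain ⟨gs₀, hgs₀, hmap⟩ := ih2 a.2 hap x₀q hq1 hq2
        have hda : d a.1 = a.2.2 := hu3 a ha
        by_cases hax : a.1 = x₀q
        · exact ⟨gs₀, hax ▸ hgs₀, hmap⟩
        · have hdesc : descends r x₀q a.1 := hq2 a.1 hda
          have hφ : φ x₀q = φ a.1 := (dker hdm hker).1 (hq1.trans hda.symm)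
          have hun : r ({x₀q} : Multiset X) a.1 := unary_rel hF' hhom hφ hdesc
          have := subst (pb hF) hun (Multiset.mem_singleton_self x₀q) hgs₀
          exact ⟨gs₀, by simpa using this, hmap⟩
      obtain ⟨t, ht1, ht2⟩ := ms_choice hctx
      have hsnd : (t.map (fun w => (w.2, w.1.1))).map Prod.snd = fs := by
        rw [← hu1, ← ht1]
        simp [Multiset.map_map, Function.comp]
      have hbig := (pb hF).2 (t.map (fun w => (w.2, w.1.1))) x₀ (by rw [hsnd]; exact hfs)
        (by
          intro q hq
          simp only [Multiset.mem_map] at hq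
          obtain ⟨w, hw, rfl⟩ := hq
          exact (ht2 w hw).1)
      refine ⟨_, hbig, ?_⟩
      have : ((t.map (fun w => (w.2, w.1.1))).map Prod.fst) = t.map (fun w => w.2) := by
        simp [Multiset.map_map, Function.comp]
      rw [this, map_sum_ms, Multiset.map_map]
      have he1 : t.map (fun w => Multiset.map d w.2) = t.map (fun w => w.1.2.1) :=
        Multiset.map_congr rfl (fun w hw => (ht2 w hw).2)
      have he2 : t.map (fun w => w.1.2.1) = p.map Prod.fst := by
        rw [← hu2, ← ht1]
        simp [Multiset.map_map, Function.comp]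
      have he0 : t.map (Multiset.map d ∘ fun w => w.2) = t.map (fun w => Multiset.map d w.2) :=
        rfl
      rw [he0, he1, he2]

end CanPack
section CanPack2
variable {r : Rel X} {r' : Rel Y} {φ : X → Y} {d : X → Z} {m : Z → Y}

lemma can_dhom : BroadHom r (GenRel (pushRel r d)) d :=
  fun fs e h => GenRel.of _ _ ⟨fs, e, h, rfl, rfl⟩

lemma can_mhom (hF' : IsForest r') (hhom : BroadHom r r' φ) (hdm : ∀ x, m (d x) = φ x) :
    BroadHom (GenRel (pushRel r d)) r' m := by
  intro zs z h
  refine GenRel_hom m (pb hF') ?_ h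
  rintro _ _ ⟨fs, e, hfs, rfl, rfl⟩
  rw [Multiset.map_map]
  have h1 : fs.map (m ∘ d) = fs.map φ := Multiset.map_congr rfl (fun x _ => hdm x)
  rw [h1, hdm e]
  exact hhom fs e hfs

lemma can_prebroad : IsPreBroad (GenRel (pushRel r d)) :=
  ⟨fun z => GenRel.refl z, fun p e h hq => GenRel.btrans p e h hq⟩

variable (hF : IsForest r) (hF' : IsForest r') (hhom : BroadHom r r' φ)
  (hind : Independent r r' φ) (hdm : ∀ x, m (d x) = φ x)
  (hds : Function.Surjective d) (hker : ∀ x x', φ x = φ x' → d x = d x')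
include hF hF' hhom hind hdm hds hker

lemma can_simple : Simple (GenRel (pushRel r d)) := by
  intro zs z h
  obtain ⟨x₀, hx₀, hmin⟩ := exists_xmin hF hF' hhom hind hdm hker hds z
  obtain ⟨fs, hfs, rfl⟩ := can_down hF hF' hhom hind hdm hker h hds x₀ hx₀ hmin
  refine Multiset.Nodup.map_on ?_ (simple hF _ _ hfs)
  intro x hx x' hx' hdd
  by_contra hne
  rcases fiber_comparable hF hF' hhom hind ((dker hdm hker).1 hdd) with h' | h' | h'
  · exact hne h'
  · exact letters_incomp hF hfs hx hx' hne h'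
  · exact letters_incomp hF hfs hx' hx (Ne.symm hne) h'

lemma can_broad (hminj : Function.Injective m) : IsBroad (GenRel (pushRel r d)) := by
  refine ⟨can_prebroad, ?_⟩
  intro z z' h1 h2
  have hm1 := can_mhom hF' hhom hdm _ _ h1
  have hm2 := can_mhom hF' hhom hdm _ _ h2
  simp only [Multiset.map_singleton] at hm1 hm2
  exact hminj (hF'.1.2 (m z) (m z') hm1 hm2)

lemma can_leaf {z : Z} {x₀ : X} (hx₀ : d x₀ = z)
    (hmin : ∀ x', d x' = z → descends r x₀ x') (hl : IsLeaf r x₀) :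
    IsLeaf (GenRel (pushRel r d)) z := by
  rintro ⟨gs, hgs, hne⟩
  obtain ⟨fs, hfs, rfl⟩ := can_down hF hF' hhom hind hdm hker hgs hds x₀ hx₀ hmin
  have : fs = ({x₀} : Multiset X) := by
    by_contra hc
    exact hl ⟨fs, hfs, hc⟩
  rw [this] at hne
  simp [hx₀] at hne

lemma can_upt {z : Z} {x₀ : X} {us : Multiset X} (hx₀ : d x₀ = z)
    (hmin : ∀ x', d x' = z → descends r x₀ x') (hup : upTuple r x₀ us) :
    upTuple (GenRel (pushRel r d)) z (us.map d) := by
  have husne : us.map d ≠ ({z} : Multiset Z) := by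
    intro hc
    have hcard : Multiset.card us = 1 := by
      have := congrArg Multiset.card hc; simpa using this
    obtain ⟨x, rfl⟩ := Multiset.card_eq_one.1 hcard
    have hdx : d x = z := by simpa using hc
    have h1 : descends r x x₀ := (up_strict hF hup (Multiset.mem_singleton_self x)).1
    have h2 : x ≠ x₀ := (up_strict hF hup (Multiset.mem_singleton_self x)).2
    exact h2 (descends_antisymm hF h1 (hmin x hdx))
  refine ⟨⟨GenRel.of _ _ ⟨us, x₀, hup.1.1, rfl, hx₀⟩, husne⟩, ?_⟩
  intro gs hgs hgne
  obtain ⟨fs, hfs, rfl⟩ := can_down hF hF' hhom hind hdm hker hgs hds x₀ hx₀ hmin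
  have hfne : fs ≠ ({x₀} : Multiset X) := by
    rintro rfl
    simp [hx₀] at hgne
  obtain ⟨p, hsnd, hfst, hrel⟩ := hup.2 fs hfs hfne
  refine ⟨p.map (fun q => (q.1.map d, d q.2)), ?_, ?_, ?_⟩
  · rw [Multiset.map_map, ← hsnd, Multiset.map_map]
    rfl
  · rw [Multiset.map_map]
    have h2 : ((p.map (fun q => Multiset.map d q.1))).sum = (p.map Prod.fst).sum.map d := by
      rw [map_sum_ms, Multiset.map_map]; rfl
    rw [show (Multiset.map (Prod.fst ∘ fun q => (Multiset.map d q.1, d q.2)) p)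
          = p.map (fun q => Multiset.map d q.1) from rfl, h2, hfst]
  · intro q hq
    simp only [Multiset.mem_map] at hq
    obtain ⟨q', hq', rfl⟩ := hq
    exact GenRel.of _ _ ⟨q'.1, q'.2, hrel q' hq', rfl, rfl⟩

omit hF hF' hhom hind hdm hds hker in
lemma can_descends_of {x x' : X} (h : descends r x x') :
    descends (GenRel (pushRel r d)) (d x) (d x') := by
  obtain ⟨fs, hfs, hx⟩ := h
  exact ⟨fs.map d, GenRel.of _ _ ⟨fs, x', hfs, rfl, rfl⟩, Multiset.mem_map_of_mem _ hx⟩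

lemma can_desc_char {z z' : Z} (h : descends (GenRel (pushRel r d)) z z')
    {x₀' : X} (hx₀' : d x₀' = z') (hmin : ∀ x', d x' = z' → descends r x₀' x') :
    ∃ x, d x = z ∧ descends r x x₀' := by
  obtain ⟨gs, hgs, hz⟩ := h
  obtain ⟨fs, hfs, rfl⟩ := can_down hF hF' hhom hind hdm hker hgs hds x₀' hx₀' hmin
  obtain ⟨x, hx, rfl⟩ := Multiset.mem_map.1 hz
  exact ⟨x, rfl, ⟨fs, hfs, hx⟩⟩

lemma can_max_of_max (hminj : Function.Injective m) {rt : X} (hrt : IsMaxEl r rt) :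
    IsMaxEl (GenRel (pushRel r d)) (d rt) := by
  intro s hdsc
  obtain ⟨x₀s, hx₀s, hmins⟩ := exists_xmin hF hF' hhom hind hdm hker hds s
  obtain ⟨x, hx, hxd⟩ := can_desc_char hF hF' hhom hind hdm hds hker hdsc hx₀s hmins
  have hxrt : descends r x rt := by
    rcases fiber_comparable hF hF' hhom hind ((dker hdm hker).1 hx) with h' | h' | h'
    · exact h' ▸ descends_refl (pb hF) rt
    · exact h'
    · exact (hrt x h') ▸ descends_refl (pb hF) rt
  rcases comparable_of_common_below hF hxd hxrt with h' | h'
  · have h1 : descends (GenRel (pushRel r d)) s (d rt) := by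
      rw [← hx₀s]; exact can_descends_of h'
    exact descends_antisymm' (can_broad hF hF' hhom hind hdm hds hker hminj)
      (can_simple hF hF' hhom hind hdm hds hker) h1 hdsc
  · have hxr : x₀s = rt := hrt x₀s h'
    rw [← hx₀s, hxr]

lemma can_max_iff (hminj : Function.Injective m) {s : Z} :
    IsMaxEl (GenRel (pushRel r d)) s ↔ ∃ rt, IsMaxEl r rt ∧ d rt = s := by
  constructor
  · intro hs
    obtain ⟨x₀s, hx₀s, _⟩ := exists_xmin hF hF' hhom hind hdm hker hds s
    obtain ⟨rt, ⟨hmax, hdsc⟩, _⟩ := uroot hF x₀s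
    have h1 : descends (GenRel (pushRel r d)) s (d rt) := by
      rw [← hx₀s]; exact can_descends_of hdsc
    exact ⟨rt, hmax, hs (d rt) h1⟩
  · rintro ⟨rt, hmax, rfl⟩
    exact can_max_of_max hF hF' hhom hind hdm hds hker hminj hmax

lemma can_uroot (hminj : Function.Injective m) (z : Z) :
    ∃! ρ, IsMaxEl (GenRel (pushRel r d)) ρ ∧ descends (GenRel (pushRel r d)) z ρ := by
  obtain ⟨a, rfl⟩ := hds z
  obtain ⟨rt, ⟨hmax, hdsc⟩, _⟩ := uroot hF a
  refine ⟨d rt, ⟨can_max_of_max hF hF' hhom hind hdm hds hker hminj hmax,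
    can_descends_of hdsc⟩, ?_⟩
  rintro ρ' ⟨hmax', hdsc'⟩
  obtain ⟨rt', hmax'', hdrt'⟩ := (can_max_iff hF hF' hhom hind hdm hds hker hminj).1 hmax'
  -- from descends (d a) ρ' get x in fiber of a with x ≤ x₀(ρ') ≤ rt'
  obtain ⟨x₀', hx₀', hmin'⟩ := exists_xmin hF hF' hhom hind hdm hker hds ρ'
  obtain ⟨x, hx, hxd⟩ := can_desc_char hF hF' hhom hind hdm hds hker hdsc' hx₀' hmin'
  have hxrt' : descends r x rt' := descends_trans (pb hF) hxd (hmin' rt' hdrt')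
  -- x and a are in same fiber, comparable
  have hxa : descends r x rt ∨ descends r a rt' := by
    rcases fiber_comparable hF hF' hhom hind ((dker hdm hker).1 hx) with h' | h' | h'
    · exact Or.inr (h' ▸ hxrt')
    · exact Or.inl (descends_trans (pb hF) h' hdsc)
    · exact Or.inr (descends_trans (pb hF) h' hxrt')
  have hrr : rt' = rt := by
    rcases hxa with h' | h'
    · obtain ⟨rt₀, _, huq⟩ := uroot hF x
      rw [huq rt' ⟨hmax'', hxrt'⟩, huq rt ⟨hmax, h'⟩]
    · obtain ⟨rt₀, _, huq⟩ := uroot hF a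
      rw [huq rt' ⟨hmax'', h'⟩, huq rt ⟨hmax, hdsc⟩]
  rw [← hdrt', hrr]

lemma can_leafcond {l : X} (hl : IsLeaf r l) : ¬ GenRel (pushRel r d) 0 (d l) := by
  intro h
  obtain ⟨x₀, hx₀, hmin⟩ := exists_xmin hF hF' hhom hind hdm hker hds (d l)
  obtain ⟨fs, hfs, hmap⟩ := can_down hF hF' hhom hind hdm hker h hds x₀ hx₀ hmin
  have hfs0 : fs = 0 := by
    by_contra hc
    obtain ⟨a, ha⟩ := Multiset.exists_mem_of_ne_zero hc
    have : d a ∈ (0 : Multiset Z) := hmap ▸ Multiset.mem_map_of_mem _ ha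
    simp at this
  subst hfs0
  -- x₀ is in the fiber of l and l is a leaf, so x₀ = l
  have hx₀l : x₀ = l := by
    have hd : descends r x₀ l := hmin l rfl
    by_contra hne
    obtain ⟨gs, hgs, hx₀gs⟩ := hd
    have : gs ≠ ({l} : Multiset X) := by
      intro hc; rw [hc] at hx₀gs; exact hne (Multiset.mem_singleton.1 hx₀gs)
    exact hl ⟨gs, hgs, this⟩
  rw [hx₀l] at hfs
  exact hl ⟨0, hfs, by simp⟩

lemma can_roottuple (hminj : Function.Injective m) {rs : Multiset X}
    (hrs : IsRootTuple r rs) : IsRootTuple (GenRel (pushRel r d)) (rs.map d) := by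
  constructor
  · refine Multiset.Nodup.map_on ?_ hrs.1
    intro x hx x' hx' hdd
    by_contra hne
    exact root_inj hF hF' hhom hind ((hrs.2 x).1 hx) ((hrs.2 x').1 hx') hne
      ((dker hdm hker).1 hdd)
  · intro z
    constructor
    · intro hz
      obtain ⟨rt, hrt, rfl⟩ := Multiset.mem_map.1 hz
      exact can_max_of_max hF hF' hhom hind hdm hds hker hminj ((hrs.2 rt).1 hrt)
    · intro hz
      obtain ⟨rt, hmax, rfl⟩ := (can_max_iff hF hF' hhom hind hdm hds hker hminj).1 hz
      exact Multiset.mem_map_of_mem _ ((hrs.2 rt).2 hmax)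

lemma can_dind (hminj : Function.Injective m) : Independent r (GenRel (pushRel r d)) d := by
  obtain ⟨rs, rs', es, hrs, hrs', hle⟩ := id hind
  refine ⟨rs, rs.map d, 0, hrs, can_roottuple hF hF' hhom hind hdm hds hker hminj hrs, ?_⟩
  refine ⟨(rs.map d).map (fun ρ => (({ρ} : Multiset Z), ρ)), ?_, ?_, ?_⟩
  · rw [Multiset.map_map]; simp [Function.comp]
  · rw [Multiset.map_map]
    have : (Multiset.map (Prod.fst ∘ fun ρ => (({ρ} : Multiset Z), ρ)) (rs.map d))
        = (rs.map d).map (fun ρ => ({ρ} : Multiset Z)) := rfl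
    rw [this, Multiset.sum_map_singleton]
    simp
  · intro q hq
    simp only [Multiset.mem_map] at hq
    obtain ⟨ρ, _, rfl⟩ := hq
    exact GenRel.refl ρ

lemma can_mind (hminj : Function.Injective m) : Independent (GenRel (pushRel r d)) r' m := by
  obtain ⟨rs, rs', es, hrs, hrs', hle⟩ := id hind
  refine ⟨rs.map d, rs', es,
    can_roottuple hF hF' hhom hind hdm hds hker hminj hrs, hrs', ?_⟩
  rw [Multiset.map_map]
  have h1 : rs.map (m ∘ d) = rs.map φ := Multiset.map_congr rfl (fun x _ => hdm x)
  rw [h1]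
  exact hle

lemma can_forest (hminj : Function.Injective m) (hZfin : Finite Z) :
    IsForest (GenRel (pushRel r d)) := by
  refine ⟨can_broad hF hF' hhom hind hdm hds hker hminj, hZfin,
    can_simple hF hF' hhom hind hdm hds hker, ?_, ?_⟩
  · intro z
    obtain ⟨x₀, hx₀, hmin⟩ := exists_xmin hF hF' hhom hind hdm hker hds z
    rcases leafup hF x₀ with hl | ⟨us, hup⟩
    · exact Or.inl (can_leaf hF hF' hhom hind hdm hds hker hx₀ hmin hl)
    · exact Or.inr ⟨us.map d, can_upt hF hF' hhom hind hdm hds hker hx₀ hmin hup⟩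
  · exact fun z => can_uroot hF hF' hhom hind hdm hds hker hminj z

end CanPack2
section Crux
variable {r : Rel X} {rz : Rel Z} {d : X → Z}
variable (hF : IsForest r) (hFz : IsForest rz) (hdhom : BroadHom r rz d)
  (hdind : Independent r rz d) (hds : Function.Surjective d)
  (hleaf : ∀ l, IsLeaf r l → ¬ rz 0 (d l))
include hF hFz hdhom hdind hds

lemma crux_sub {zs : Multiset Z} {z : Z} (h : GenRel (pushRel r d) zs z) : rz zs z := by
  have := can_mhom (d := d) (m := id) hFz hdhom (fun _ => rfl) zs z h
  simpa using this

lemma crux_desc_sub {z z' : Z} (h : descends (GenRel (pushRel r d)) z z') :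
    descends rz z z' := by
  obtain ⟨gs, hgs, hz⟩ := h
  exact ⟨gs, crux_sub hF hFz hdhom hdind hds hgs, hz⟩

lemma crux_canforest : IsForest (GenRel (pushRel r d)) :=
  can_forest (φ := d) (d := d) (m := (id : Z → Z)) hF hFz hdhom hdind (fun _ => rfl) hds
    (fun _ _ h => h) (fun a b h => h) hFz.2.1

lemma crux_max_iff {s : Z} : IsMaxEl rz s ↔ IsMaxEl (GenRel (pushRel r d)) s := by
  constructor
  · intro hs t ht
    exact hs t (crux_desc_sub hF hFz hdhom hdind hds ht)
  · intro hs
    -- s = d rt with rt maximal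
    obtain ⟨rt, hrt, rfl⟩ :=
      (can_max_iff (φ := d) (d := d) (m := (id : Z → Z)) hF hFz hdhom hdind (fun _ => rfl)
        hds (fun _ _ h => h) (fun a b h => h)).1 hs
    -- let ρ be the rz-root above d rt
    obtain ⟨ρ, ⟨hρmax, hρdesc⟩, hρuniq⟩ := uroot hFz (d rt)
    have hρeq : ρ = d rt := by
      by_contra hne
      obtain ⟨rs₀, rsZ, es, hrs₀, hrsZ, p, hsnd, hfst, hrel⟩ := id hdind
      -- block containing d rt
      have hmem : d rt ∈ (p.map Prod.fst).sum := by
        rw [hfst]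
        exact Multiset.mem_add.2 (Or.inl (Multiset.mem_map_of_mem _ ((hrs₀.2 rt).2 hrt)))
      obtain ⟨t1, ht1p, hin1⟩ := mem_sum_ms hmem
      obtain ⟨q₁, hq₁, rfl⟩ := Multiset.mem_map.1 ht1p
      have hq₁max : IsMaxEl rz q₁.2 := (hrsZ.2 q₁.2).1 (hsnd ▸ Multiset.mem_map_of_mem _ hq₁)
      have hq₁ρ : q₁.2 = ρ := hρuniq q₁.2 ⟨hq₁max, ⟨q₁.1, hrel q₁ hq₁, hin1⟩⟩
      -- ρ is rz-maximal hence can-maximal hence of the form d rt'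
      have hρcan : IsMaxEl (GenRel (pushRel r d)) ρ := by
        intro t ht
        exact hρmax t (crux_desc_sub hF hFz hdhom hdind hds ht)
      obtain ⟨rt', hrt', hdrt'⟩ :=
        (can_max_iff (φ := d) (d := d) (m := (id : Z → Z)) hF hFz hdhom hdind (fun _ => rfl)
          hds (fun _ _ h => h) (fun a b h => h)).1 hρcan
      have hmem' : (ρ : Z) ∈ (p.map Prod.fst).sum := by
        rw [hfst, ← hdrt']
        exact Multiset.mem_add.2 (Or.inl (Multiset.mem_map_of_mem _ ((hrs₀.2 rt').2 hrt')))
      obtain ⟨t2, ht2p, hin2⟩ := mem_sum_ms hmem'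
      obtain ⟨q₂, hq₂, rfl⟩ := Multiset.mem_map.1 ht2p
      have hq₂ρ : q₂.2 = ρ := hρmax q₂.2 ⟨q₂.1, hrel q₂ hq₂, hin2⟩
      have hqq : q₁ = q₂ := by
        have hndm : (p.map Prod.snd).Nodup := hsnd ▸ hrsZ.1
        exact Multiset.inj_on_of_nodup_map hndm q₁ hq₁ q₂ hq₂ (hq₁ρ.trans hq₂ρ.symm)
      -- so the block q₁.1 contains ρ and is a tuple below ρ; hence q₁.1 = {ρ}
      have hq₁rel : rz q₁.1 ρ := hq₁ρ ▸ hrel q₁ hq₁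
      have hbs : q₁.1 = ({ρ} : Multiset Z) :=
        mem_self' hFz.1 hFz.2.2.1 hq₁rel (hqq ▸ hin2)
      rw [hbs] at hin1
      exact hne (Multiset.mem_singleton.1 hin1).symm
    intro t ht
    obtain ⟨ρt, ⟨hρtmax, hρtdesc⟩, _⟩ := uroot hFz t
    have h1 : descends rz (d rt) ρt := descends_trans (pb hFz) ht hρtdesc
    have h2 : ρt = ρ := hρuniq ρt ⟨hρtmax, h1⟩
    have h3 : descends rz t (d rt) := by rw [← hρeq, ← h2]; exact hρtdesc
    exact descends_antisymm hFz h3 ht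

include hleaf in
lemma crux_stump_aux :
    ∀ n : ℕ, ∀ {x₀ : X} {z : Z}, htr r x₀ ≤ n → d x₀ = z →
      (∀ x', d x' = z → descends r x₀ x') → rz 0 z → r 0 x₀ := by
  classical
  intro n
  induction n with
  | zero =>
      intro x₀ z hn _ _ _
      exfalso; have := htr_pos hF x₀; omega
  | succ n ih =>
      intro x₀ z hn hx₀ hmin h0
      rcases leafup hF x₀ with hl | ⟨us, hup⟩
      · exact absurd (hx₀ ▸ h0) (hleaf x₀ hl)
      · have hallu : ∀ u ∈ us, r 0 u := by
          intro u hu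
          have hdu : descends rz (d u) z := by
            rw [← hx₀]
            exact crux_desc_sub hF hFz hdhom hdind hds
              (can_descends_of ⟨us, hup.1.1, hu⟩)
          have h0u : rz 0 (d u) := stump_down hFz h0 hdu
          obtain ⟨x₀u, hx₀u, hminu⟩ :=
            exists_xmin (φ := d) (d := d) (m := (id : Z → Z)) hF hFz hdhom hdind (fun _ => rfl) (fun _ _ h => h) hds (d u)
          have hx₀u_le : descends r x₀u u := hminu u rfl
          have hustrict := up_strict hF hup hu
          have hle1 : htr r x₀u ≤ htr r u := by
            by_cases hequ : x₀u = u
            · rw [hequ]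
            · exact le_of_lt (ht_lt hF hx₀u_le hequ)
          have hlt : htr r x₀u ≤ n := by
            have := ht_lt hF hustrict.1 hustrict.2
            omega
          have h0x₀u : r 0 x₀u := ih hlt hx₀u hminu h0u
          by_cases hequ : x₀u = u
          · exact hequ ▸ h0x₀u
          · have hun : r ({x₀u} : Multiset X) u := unary_rel hFz hdhom hx₀u hx₀u_le
            have := subst (pb hF) hun (Multiset.mem_singleton_self x₀u) h0x₀u
            simpa using this
        have := (pb hF).2 (us.map (fun u => ((0 : Multiset X), u))) x₀
          (by rw [Multiset.map_map]; simpa using hup.1.1)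
          (by
            intro q hq
            simp only [Multiset.mem_map] at hq
            obtain ⟨u, hu, rfl⟩ := hq
            exact hallu u hu)
        rw [Multiset.map_map] at this
        simpa using this

include hleaf in
lemma crux_stump {z : Z} (h0 : rz 0 z) : GenRel (pushRel r d) 0 z := by
  obtain ⟨x₀, hx₀, hmin⟩ :=
    exists_xmin (φ := d) (d := d) (m := (id : Z → Z)) hF hFz hdhom hdind (fun _ => rfl) (fun _ _ h => h) hds z
  have := crux_stump_aux hF hFz hdhom hdind hds hleaf (htr r x₀) (le_refl _) hx₀ hmin h0
  exact GenRel.of _ _ ⟨0, x₀, this, by simp, hx₀⟩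

end Crux
section Crux2
variable {r : Rel X} {rz : Rel Z} {d : X → Z}
variable (hF : IsForest r) (hFz : IsForest rz) (hdhom : BroadHom r rz d)
  (hdind : Independent r rz d) (hds : Function.Surjective d)
  (hleaf : ∀ l, IsLeaf r l → ¬ rz 0 (d l))
include hF hFz hdhom hdind hds hleaf

lemma crux_at {z : Z}
    (hDz : ∀ y, descends rz y z ↔ descends (GenRel (pushRel r d)) y z)
    {vs : Multiset Z} (hup : upTuple rz z vs) :
    GenRel (pushRel r d) vs z ∧
      ∀ u ∈ vs, ∀ y, descends rz y u ↔ descends (GenRel (pushRel r d)) y u := by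
  have hcan : IsForest (GenRel (pushRel r d)) :=
    crux_canforest hF hFz hdhom hdind hds
  obtain ⟨x₀, hx₀, hmin⟩ :=
    exists_xmin (φ := d) (d := d) (m := (id : Z → Z)) hF hFz hdhom hdind (fun _ => rfl)
      (fun _ _ h => h) hds z
  rcases leafup hF x₀ with hl | ⟨us, hupx⟩
  · -- x₀ is a leaf: z is a canonical leaf; contradiction with hup
    exfalso
    have hzleaf : IsLeaf (GenRel (pushRel r d)) z :=
      can_leaf (φ := d) (d := d) (m := (id : Z → Z)) hF hFz hdhom hdind (fun _ => rfl) hds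
        (fun _ _ h => h) hx₀ hmin hl
    by_cases hvs : vs = 0
    · subst hvs
      exact hzleaf ⟨0, crux_stump hF hFz hdhom hdind hds hleaf hup.1.1, by simp⟩
    · obtain ⟨v, hv⟩ := Multiset.exists_mem_of_ne_zero hvs
      have hvstrict := up_strict hFz hup hv
      have hvcan : descends (GenRel (pushRel r d)) v z := (hDz v).1 hvstrict.1
      obtain ⟨gs', hgs', hv'⟩ := hvcan
      have : gs' ≠ ({z} : Multiset Z) := by
        intro hc; rw [hc] at hv'; exact hvstrict.2 (Multiset.mem_singleton.1 hv')
      exact hzleaf ⟨gs', hgs', this⟩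
  · -- x₀ has up-tuple us; us.map d is the canonical up-tuple of z
    have hupc : upTuple (GenRel (pushRel r d)) z (us.map d) :=
      can_upt (φ := d) (d := d) (m := (id : Z → Z)) hF hFz hdhom hdind (fun _ => rfl) hds
        (fun _ _ h => h) hx₀ hmin hupx
    have husrel : rz (us.map d) z := crux_sub hF hFz hdhom hdind hds hupc.1.1
    -- partition into canonical branches
    have hpart : ∀ y, descends (GenRel (pushRel r d)) y z → y ≠ z →
        ∃ u ∈ us.map d, descends (GenRel (pushRel r d)) y u := by
      intro y hy hyne
      obtain ⟨gs', hgs', hy'⟩ := hy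
      have hne : gs' ≠ ({z} : Multiset Z) := by
        intro hc; rw [hc] at hy'; exact hyne (Multiset.mem_singleton.1 hy')
      obtain ⟨b, u, hbu, hyb, hu⟩ := tupleLE_mem (hupc.2 gs' hgs' hne) hy'
      exact ⟨u, hu, ⟨b, hbu, hyb⟩⟩
    -- each canonical branch root lies below some element of vs
    have hbranch : ∀ u ∈ us.map d, ∃ v' ∈ vs, descends rz u v' := by
      intro u hu
      have hustrict := up_strict hcan hupc hu
      have huz : descends rz u z := crux_desc_sub hF hFz hdhom hdind hds hustrict.1
      obtain ⟨gs₀, hgs₀, hu₀⟩ := huz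
      have hne : gs₀ ≠ ({z} : Multiset Z) := by
        intro hc; rw [hc] at hu₀; exact hustrict.2 (Multiset.mem_singleton.1 hu₀)
      obtain ⟨b', v', hbv, hub, hv'⟩ := tupleLE_mem (hup.2 gs₀ hgs₀ hne) hu₀
      exact ⟨v', hv', ⟨b', hbv, hub⟩⟩
    have hsub1 : ∀ v ∈ vs, v ∈ us.map d := by
      intro v hv
      have hvstrict := up_strict hFz hup hv
      obtain ⟨u, hu, hvu⟩ := hpart v ((hDz v).1 hvstrict.1) hvstrict.2
      obtain ⟨v', hv', huv'⟩ := hbranch u hu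
      have hvv' : descends rz v v' :=
        descends_trans (pb hFz) (crux_desc_sub hF hFz hdhom hdind hds hvu) huv'
      have hveq : v = v' := by
        by_contra hne
        exact letters_incomp hFz hup.1.1 hv hv' hne hvv'
      subst hveq
      have : v = u := descends_antisymm hFz
        (crux_desc_sub hF hFz hdhom hdind hds hvu) huv'
      exact this ▸ hu
    have hsub2 : ∀ u ∈ us.map d, u ∈ vs := by
      intro u hu
      obtain ⟨v', hv', huv'⟩ := hbranch u hu
      have hv'us : v' ∈ us.map d := hsub1 v' hv'
      have : u = v' := by
        by_contra hne
        exact letters_incomp hFz husrel hu hv'us hne huv'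
      exact this ▸ hv'
    have hnd2 : (us.map d).Nodup := simple hcan _ _ hupc.1.1
    have heq : vs = us.map d := by
      rw [Multiset.Nodup.ext (simple hFz _ _ hup.1.1) hnd2]
      exact fun a => ⟨hsub1 a, hsub2 a⟩
    constructor
    · rw [heq]; exact hupc.1.1
    · intro u hu y
      constructor
      · intro hy
        have huus : u ∈ us.map d := hsub1 u hu
        have huz : descends rz u z := (up_strict hFz hup hu).1
        have hyz : descends rz y z := descends_trans (pb hFz) hy huz
        have hynez : y ≠ z := by
          rintro rfl
          exact (up_strict hFz hup hu).2 (descends_antisymm hFz huz hy)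
        obtain ⟨u', hu', hyu'⟩ := hpart y ((hDz y).1 hyz) hynez
        have huu' : u = u' := by
          by_contra hne
          rcases comparable_of_common_below hFz hy
            (crux_desc_sub hF hFz hdhom hdind hds hyu') with h' | h'
          · exact letters_incomp hFz husrel huus hu' hne h'
          · exact letters_incomp hFz husrel hu' huus (Ne.symm hne) h'
        exact huu' ▸ hyu'
      · exact fun hy => crux_desc_sub hF hFz hdhom hdind hds hy

lemma crux_hD_down :
    ∀ n : ℕ, ∀ {z : Z}, htr rz z ≤ n →
      (∀ y, descends rz y z ↔ descends (GenRel (pushRel r d)) y z) →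
      ∀ {y : Z}, descends rz y z →
        ∀ w, descends rz w y ↔ descends (GenRel (pushRel r d)) w y := by
  intro n
  induction n with
  | zero =>
      intro z hn _ _ _
      exfalso; have := htr_pos hFz z; omega
  | succ n ih =>
      intro z hn hDz y hy
      by_cases hyz : y = z
      · exact hyz ▸ hDz
      · obtain ⟨gs, hgs, hygs⟩ := hy
        have hgsne : gs ≠ ({z} : Multiset Z) := by
          intro hc; rw [hc] at hygs; exact hyz (Multiset.mem_singleton.1 hygs)
        obtain ⟨vs, hup⟩ := not_leaf_of hFz hgs hgsne
        obtain ⟨_, hDu⟩ := crux_at hF hFz hdhom hdind hds hleaf hDz hup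
        obtain ⟨b, v, hbv, hyb, hv⟩ := tupleLE_mem (hup.2 gs hgs hgsne) hygs
        have hvstrict := up_strict hFz hup hv
        have hlt : htr rz v ≤ n := by
          have := ht_lt hFz hvstrict.1 hvstrict.2
          omega
        exact ih hlt (hDu v hv) ⟨b, hbv, hyb⟩

lemma crux_hD (z : Z) :
    ∀ y, descends rz y z ↔ descends (GenRel (pushRel r d)) y z := by
  obtain ⟨ρ, ⟨hρmax, hρdesc⟩, _⟩ := uroot hFz z
  have hcan : IsForest (GenRel (pushRel r d)) :=
    crux_canforest hF hFz hdhom hdind hds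
  have hDρ : ∀ y, descends rz y ρ ↔ descends (GenRel (pushRel r d)) y ρ := by
    intro y
    constructor
    · intro hy
      obtain ⟨ρy, ⟨hρymax, hρydesc⟩, _⟩ := uroot hcan y
      have hρyrz : IsMaxEl rz ρy :=
        (crux_max_iff hF hFz hdhom hdind hds).2 hρymax
      have h1 : descends rz y ρy := crux_desc_sub hF hFz hdhom hdind hds hρydesc
      obtain ⟨ρ₀, _, huq⟩ := uroot hFz y
      have e1 : ρy = ρ₀ := huq ρy ⟨hρyrz, h1⟩
      have e2 : ρ = ρ₀ := huq ρ ⟨hρmax, hy⟩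
      rw [e2, ← e1]
      exact hρydesc
    · exact fun hy => crux_desc_sub hF hFz hdhom hdind hds hy
  exact crux_hD_down hF hFz hdhom hdind hds hleaf (htr rz ρ) (le_refl _) hDρ hρdesc

lemma crux_main {zs : Multiset Z} {z : Z} (h : rz zs z) : GenRel (pushRel r d) zs z := by
  refine GenRel_subset can_prebroad ?_ (rel_genUp hFz h)
  intro vs z' hup
  exact (crux_at hF hFz hdhom hdind hds hleaf (crux_hD hF hFz hdhom hdind hds hleaf z') hup).1

end Crux2
/-- Every independent map of forests factors as a degeneracy
followed by a face map, uniquely up to unique isomorphism. -/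
theorem stmt11 {X Y : Type u} (r : Rel X) (r' : Rel Y) (φ : X → Y)
    (hF : IsForest r) (hF' : IsForest r')
    (hhom : BroadHom r r' φ) (hind : Independent r r' φ) :
    (∃ (Z : Type u) (rz : Rel Z) (d : X → Z) (m : Z → Y),
      IsForest rz ∧
      BroadHom r rz d ∧ Independent r rz d ∧ Function.Surjective d ∧
        (∀ l, IsLeaf r l → ¬ rz 0 (d l)) ∧
      BroadHom rz r' m ∧ Independent rz r' m ∧ Function.Injective m ∧
      m ∘ d = φ) ∧
    (∀ (Z₁ Z₂ : Type u) (rz₁ : Rel Z₁) (rz₂ : Rel Z₂)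
        (d₁ : X → Z₁) (m₁ : Z₁ → Y) (d₂ : X → Z₂) (m₂ : Z₂ → Y),
      IsForest rz₁ → IsForest rz₂ →
      BroadHom r rz₁ d₁ → Independent r rz₁ d₁ → Function.Surjective d₁ →
        (∀ l, IsLeaf r l → ¬ rz₁ 0 (d₁ l)) →
      BroadHom rz₁ r' m₁ → Independent rz₁ r' m₁ → Function.Injective m₁ →
      m₁ ∘ d₁ = φ →
      BroadHom r rz₂ d₂ → Independent r rz₂ d₂ → Function.Surjective d₂ →
        (∀ l, IsLeaf r l → ¬ rz₂ 0 (d₂ l)) →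
      BroadHom rz₂ r' m₂ → Independent rz₂ r' m₂ → Function.Injective m₂ →
      m₂ ∘ d₂ = φ →
      ∃! θ : Z₁ → Z₂, IsIso rz₁ rz₂ θ ∧ θ ∘ d₁ = d₂ ∧ m₂ ∘ θ = m₁) := by
  constructor
  · -- existence via the quotient
    let s : Setoid X := ⟨fun a b => φ a = φ b, ⟨fun _ => rfl, Eq.symm, Eq.trans⟩⟩
    let Z := Quotient s
    let d : X → Z := Quotient.mk s
    let m : Z → Y := Quotient.lift φ (fun a b h => h)
    have hdm : ∀ x, m (d x) = φ x := fun _ => rfl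
    have hds : Function.Surjective d := Quotient.exists_rep
    have hker : ∀ x x', φ x = φ x' → d x = d x' := fun x x' h => Quotient.sound h
    have hminj : Function.Injective m := by
      intro a b
      refine Quotient.inductionOn₂ a b ?_
      intro x y h
      exact Quotient.sound h
    have hZfin : Finite Z := by
      have : Finite X := fin hF
      exact Quotient.finite s
    refine ⟨Z, GenRel (pushRel r d), d, m, ?_, can_dhom, ?_, hds, ?_, ?_, ?_, hminj, ?_⟩
    · exact can_forest hF hF' hhom hind hdm hds hker hminj hZfin
    · exact can_dind hF hF' hhom hind hdm hds hker hminj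
    · exact fun l hl => can_leafcond hF hF' hhom hind hdm hds hker hl
    · exact can_mhom hF' hhom hdm
    · exact can_mind hF hF' hhom hind hdm hds hker hminj
    · funext x; rfl
  · -- uniqueness
    intro Z₁ Z₂ rz₁ rz₂ d₁ m₁ d₂ m₂ hFz₁ hFz₂ hdhom₁ hdind₁ hds₁ hleaf₁ hmhom₁ hmind₁
      hminj₁ hmd₁ hdhom₂ hdind₂ hds₂ hleaf₂ hmhom₂ hmind₂ hminj₂ hmd₂
    have hdm₁ : ∀ x, m₁ (d₁ x) = φ x := fun x => congrFun hmd₁ x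
    have hdm₂ : ∀ x, m₂ (d₂ x) = φ x := fun x => congrFun hmd₂ x
    have hker12 : ∀ x x', d₁ x = d₁ x' → d₂ x = d₂ x' := by
      intro x x' h
      apply hminj₂
      rw [hdm₂, hdm₂, ← hdm₁, ← hdm₁, h]
    have hker21 : ∀ x x', d₂ x = d₂ x' → d₁ x = d₁ x' := by
      intro x x' h
      apply hminj₁
      rw [hdm₁, hdm₁, ← hdm₂, ← hdm₂, h]
    let θ : Z₁ → Z₂ := fun z => d₂ (Function.surjInv hds₁ z)
    let ψ : Z₂ → Z₁ := fun z => d₁ (Function.surjInv hds₂ z)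
    have hθd : ∀ x, θ (d₁ x) = d₂ x := by
      intro x
      exact hker12 _ _ (Function.surjInv_eq hds₁ (d₁ x))
    have hψd : ∀ x, ψ (d₂ x) = d₁ x := by
      intro x
      exact hker21 _ _ (Function.surjInv_eq hds₂ (d₂ x))
    have hθhom : BroadHom rz₁ rz₂ θ := by
      intro zs z h
      have h1 : GenRel (pushRel r d₁) zs z :=
        crux_main hF hFz₁ hdhom₁ hdind₁ hds₁ hleaf₁ h
      refine GenRel_hom θ (pb hFz₂) ?_ h1
      rintro _ _ ⟨fs, e, hfs, rfl, rfl⟩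
      rw [Multiset.map_map]
      have : fs.map (θ ∘ d₁) = fs.map d₂ := Multiset.map_congr rfl (fun x _ => hθd x)
      rw [this, hθd e]
      exact hdhom₂ fs e hfs
    have hψhom : BroadHom rz₂ rz₁ ψ := by
      intro zs z h
      have h1 : GenRel (pushRel r d₂) zs z :=
        crux_main hF hFz₂ hdhom₂ hdind₂ hds₂ hleaf₂ h
      refine GenRel_hom ψ (pb hFz₁) ?_ h1
      rintro _ _ ⟨fs, e, hfs, rfl, rfl⟩
      rw [Multiset.map_map]
      have : fs.map (ψ ∘ d₂) = fs.map d₁ := Multiset.map_congr rfl (fun x _ => hψd x)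
      rw [this, hψd e]
      exact hdhom₁ fs e hfs
    have hli : Function.LeftInverse ψ θ := by
      intro z
      obtain ⟨x, rfl⟩ := hds₁ z
      rw [hθd, hψd]
    have hri : Function.RightInverse ψ θ := by
      intro z
      obtain ⟨x, rfl⟩ := hds₂ z
      rw [hψd, hθd]
    refine ⟨θ, ⟨⟨hθhom, ψ, hψhom, hli, hri⟩, funext hθd, ?_⟩, ?_⟩
    · funext z
      obtain ⟨x, rfl⟩ := hds₁ z
      show m₂ (θ (d₁ x)) = m₁ (d₁ x)
      rw [hθd, hdm₂, hdm₁]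
    · rintro θ' ⟨_, hθ'd, _⟩
      funext z
      obtain ⟨x, rfl⟩ := hds₁ z
      have := congrFun hθ'd x
      simp only [Function.comp] at this
      rw [show θ' (d₁ x) = d₂ x from this, hθd]

end BroadPaper
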